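/- There is no function dinv : Sch_{2,1}^2 → ℕ and no integer w such that the two-variable polynomial S(q,t) = Σ_{α ∈ Sch_{2,1}^2} q^{aire(α)}·t^{dinv(α)} is symmetric in q and t (i.e. S(q,t) = S(t,q)) and simultaneously q^w · Σ_{α ∈ Sch_{2,1}^2} q^{aire(α) − dinv(α)} = 1 + q + q² + q³ in ℤ[q, q⁻¹]. In particular, there is no definition of a dinv statistic on r-Schröder paths making S_{n,d}^r(q,t) symmetric with the desired q-specialization for all r. -/

import Mathlib

/-- Steps of an `r`-Schröder path: down `(0,-1)`, right `(1,0)`, diagonal `(r,-1)`. -/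
inductive SStep : Type
  | down | right | diag
deriving DecidableEq

/-- Displacement of a step for slope parameter `r`. -/
def sDisp (r : ℤ) : SStep → ℤ × ℤ
  | .down => (0, -1)
  | .right => (1, 0)
  | .diag => (r, -1)

/-- Position reached after performing the steps `l`, starting at `(0, n)`. -/
def sPos (r n : ℤ) (l : List SStep) : ℤ × ℤ :=
  l.foldl (fun p s => p + sDisp r s) (0, n)

/-- `α` is an `r`-Schröder path of size `n`: it goes from `(0,n)` to `(r*n, 0)` and never
passes strictly above the line segment joining `(0,n)` and `(r*n,0)`
(the segment lies on the line `x + r*y = r*n`). -/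
def IsSchroder (r n : ℕ) (α : List SStep) : Prop :=
  sPos r n α = ((r : ℤ) * n, 0) ∧
  ∀ β, β <+: α → (sPos r n β).1 + (r : ℤ) * (sPos r n β).2 ≤ (r : ℤ) * n

/-- `Sch r n d` : the set of `r`-Schröder paths of size `n` with exactly `n - d`
diagonal steps. -/
def Sch (r n d : ℕ) : Set (List SStep) :=
  {α | IsSchroder r n α ∧ α.count SStep.diag = n - d}


/-- The left-area code of a path: scanning the steps with current `x`-coordinate,
each down step contributes the entry `(x, false)` and each diagonal step contributes
`(x, true)`; right steps contribute nothing. -/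
def sCode (r : ℤ) : ℤ → List SStep → List (ℤ × Bool)
  | _, [] => []
  | x, .down :: t => (x, false) :: sCode r x t
  | x, .right :: t => sCode r (x + 1) t
  | x, .diag :: t => (x, true) :: sCode r (x + r) t

/-- The area of a path: `aire(α) = ∑_{i=1}^{n} (r*(i-1) - a_i)`, where `a_i` is the
left area of row `i`; this counts the cells between the path and the boundary line. -/
def aire (r : ℕ) (α : List SStep) : ℤ :=
  ∑ i ∈ Finset.range ((sCode r 0 α).length),
    ((r : ℤ) * i - (((sCode r 0 α).map Prod.fst).getD i 0))

namespace SchAux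

open SStep

instance : Fintype SStep :=
  ⟨⟨{down, .right, diag}, by decide⟩, by intro x; cases x <;> decide⟩

lemma foldl_disp (r : ℤ) (l : List SStep) : ∀ p : ℤ × ℤ,
    l.foldl (fun p s => p + sDisp r s) p
      = p + ((l.count .right : ℤ) + r * l.count .diag,
             -(l.count .down : ℤ) - l.count .diag) := by
  induction l with
  | nil => intro p; simp
  | cons s t ih =>
    intro p
    rw [List.foldl_cons, ih]
    cases s <;>
      simp only [sDisp, List.count_cons, Prod.ext_iff, Prod.fst_add, Prod.snd_add,
        beq_iff_eq, if_true, if_false, reduceCtorEq, reduceIte] <;>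
      constructor <;> push_cast <;> ring

lemma sPos_eq (r n : ℤ) (l : List SStep) :
    sPos r n l = ((l.count .right : ℤ) + r * l.count .diag,
                  n - (l.count .down : ℤ) - l.count .diag) := by
  rw [sPos, foldl_disp]
  simp only [Prod.mk_add_mk, Prod.mk.injEq]
  constructor <;> ring

lemma length_eq (l : List SStep) :
    l.length = l.count down + l.count .right + l.count diag := by
  induction l with
  | nil => simp
  | cons s t ih => cases s <;> simp [List.count_cons, ih] <;> omega

def L1 : List SStep := [diag, down, .right, .right]
def L2 : List SStep := [down, diag, .right, .right]
def L3 : List SStep := [down, .right, diag, .right]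
def L4 : List SStep := [down, .right, .right, diag]

def F : Finset (List SStep) := {L1, L2, L3, L4}

lemma sch_eq : Sch 2 2 1 = ↑F := by
  ext α
  constructor
  · rintro ⟨⟨hpos, hpre⟩, hc⟩
    have hc' : α.count diag = 1 := hc
    have hpre' : ∀ β ∈ α.inits,
        (sPos 2 2 β).1 + (2 : ℤ) * (sPos 2 2 β).2 ≤ ((2:ℕ) : ℤ) * ((2:ℕ) : ℤ) :=
      fun β hβ => hpre β ((List.mem_inits _ _).mp hβ)
    have h1 : (α.count SStep.right : ℤ) + 2 * α.count diag = 4 := by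
      have := congrArg Prod.fst hpos
      rw [sPos_eq] at this
      push_cast at this ⊢
      omega
    have h2 : ((2:ℤ)) - α.count down - α.count diag = 0 := by
      have := congrArg Prod.snd hpos
      rw [sPos_eq] at this
      push_cast at this ⊢
      omega
    have hr : α.count SStep.right = 2 := by omega
    have hdn : α.count down = 1 := by omega
    have hl : α.length = 4 := by
      rw [length_eq]
      omega
    clear hpre hpos hc h1 h2
    rcases α with _ | ⟨a, _ | ⟨b, _ | ⟨c, _ | ⟨d, _ | ⟨e, t⟩⟩⟩⟩⟩ <;>
      simp only [List.length] at hl <;> try omega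
    rw [Finset.mem_coe]
    revert hc' hpre' hr hdn
    revert a b c d
    decide
  · intro hα
    rw [Finset.mem_coe] at hα
    have key : ∀ L ∈ F, sPos 2 2 L = (4, 0) ∧
        (∀ β ∈ L.inits, (sPos 2 2 β).1 + (2 : ℤ) * (sPos 2 2 β).2 ≤ 4) ∧
        L.count diag = 1 := by decide
    obtain ⟨k1, k2, k3⟩ := key _ hα
    refine ⟨⟨by push_cast; rw [k1], fun β hβ => ?_⟩, k3⟩
    have := k2 β ((List.mem_inits _ _).mpr hβ)
    push_cast
    linarith

lemma sum_F {M : Type*} [AddCommMonoid M] (f : List SStep → M) :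
    ∑ α ∈ F, f α = f L1 + f L2 + f L3 + f L4 := by
  rw [F, Finset.sum_insert (by decide), Finset.sum_insert (by decide),
    Finset.sum_insert (by decide), Finset.sum_singleton, add_assoc, add_assoc]

lemma aire1 : aire 2 L1 = 0 := by decide
lemma aire2 : aire 2 L2 = 2 := by decide
lemma aire3 : aire 2 L3 = 1 := by decide
lemma aire4 : aire 2 L4 = 0 := by decide

end SchAux

open LaurentPolynomial in
/-- There is no inversion statistic `dinv` on `Sch_{2,1}^2` and integer `w` such that the
polynomial `S(q,t) = ∑_{α ∈ Sch_{2,1}^2} q^(aire α) t^(dinv α)` is symmetric in `q`, `t`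
and simultaneously `q^w ⬝ ∑_{α} q^(aire α - dinv α) = 1 + q + q² + q³` in `ℤ[q,q⁻¹]`. -/
theorem no_symmetric_dinv (s : Finset (List SStep))
    (hs : (↑s : Set (List SStep)) = Sch 2 2 1) :
    ¬ ∃ (dinv : List SStep → ℕ) (w : ℤ),
        (MvPolynomial.rename ⇑(Equiv.swap (0 : Fin 2) 1))
            (∑ α ∈ s, MvPolynomial.X 0 ^ (aire 2 α).toNat * MvPolynomial.X 1 ^ dinv α
              : MvPolynomial (Fin 2) ℤ)
          = ∑ α ∈ s, MvPolynomial.X 0 ^ (aire 2 α).toNat * MvPolynomial.X 1 ^ dinv α ∧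
        (∑ α ∈ s, (T (w + aire 2 α - (dinv α : ℤ)) : LaurentPolynomial ℤ))
          = 1 + T 1 + T 2 + T 3 := by
  
  obtain rfl : s = SchAux.F := Finset.coe_injective (hs.trans SchAux.sch_eq)
  rintro ⟨dinv, w, hA, hB⟩
  rw [SchAux.sum_F] at hA
  rw [SchAux.sum_F] at hB
  rw [SchAux.aire1, SchAux.aire2, SchAux.aire3, SchAux.aire4] at hA hB
  set d1 := dinv SchAux.L1 with hd1
  set d2 := dinv SchAux.L2 with hd2
  set d3 := dinv SchAux.L3 with hd3
  set d4 := dinv SchAux.L4 with hd4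
  -- symmetry gives sum of dinv = 3
  have hsum3 : (d1 : ℤ) + d2 + d3 + d4 = 3 := by
    have h := congrArg (MvPolynomial.aeval (![1, Polynomial.X] : Fin 2 → Polynomial ℤ)) hA
    rw [MvPolynomial.aeval_rename] at h
    simp only [map_add, map_mul, map_pow, MvPolynomial.aeval_X, Function.comp_apply,
      Equiv.swap_apply_left, Equiv.swap_apply_right, Matrix.cons_val_zero,
      Matrix.cons_val_one, Matrix.head_cons, one_pow, one_mul, mul_one] at h
    have h2 := congrArg (fun p => Polynomial.eval 1 (Polynomial.derivative p)) h
    simp [Polynomial.derivative_X_pow] at h2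
    linarith [h2]
  -- Laurent condition gives sum of exponents = 6
  have hS : ∃ S : LaurentPolynomial ℤ →+ ℤ, ∀ k : ℤ, S (T k : LaurentPolynomial ℤ) = k := by
    refine ⟨(Finsupp.liftAddHom (fun k => AddMonoidHom.mulLeft k)).comp
      AddMonoidAlgebra.coeffAddEquiv.toAddMonoidHom, fun k => ?_⟩
    show Finsupp.liftAddHom (fun k => AddMonoidHom.mulLeft k) (Finsupp.single k 1) = k
    rw [Finsupp.liftAddHom_apply_single]
    exact mul_one k
  obtain ⟨S, hSk⟩ := hS
  have h6 : (w + 0 - d1) + (w + 2 - d2) + (w + 1 - d3) + (w + 0 - d4) = 6 := by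
    have h := congrArg (⇑S) hB
    rw [show (1 : LaurentPolynomial ℤ) = T 0 from rfl] at h
    simp only [map_add, hSk] at h
    linarith
  omega
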